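/- Let q be an odd prime power, let d ≥ 6, let 𝓔 ⊆ F_q^d be a finite set with |𝓔| ≥ 313·q^(d/2) (real exponent d/2), and let r ∈ F_q. If |P_1(r)| > 1.26844 · |𝓔|^(11/3) (an inequality of real numbers, with real exponent 11/3), then 𝓔 contains a pair of 4-paths with dilation ratio r. -/

import Mathlib

/-- `norm2 x = x₁² + ⋯ + x_d²` for `x ∈ F_q^d`. -/
def norm2 {F : Type*} [Field F] {d : ℕ} (x : Fin d → F) : F := ∑ i, x i ^ 2

/-- `𝓔` contains a pair of `k`-stars with dilation ratio `r`: there are distinct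
`x₁, …, x_{k+1} ∈ 𝓔` and distinct `y₁, …, y_{k+1} ∈ 𝓔` with
`‖y_i − y₁‖ = r‖x_i − x₁‖ ≠ 0` for `i = 2, …, k+1`. -/
def ContainsPairOfStars {F : Type*} [Field F] {d : ℕ}
    (𝓔 : Finset (Fin d → F)) (k : ℕ) (r : F) : Prop :=
  ∃ x y : Fin (k + 1) → (Fin d → F),
    Function.Injective x ∧ Function.Injective y ∧
    (∀ i, x i ∈ 𝓔) ∧ (∀ i, y i ∈ 𝓔) ∧
    ∀ i : Fin (k + 1), i ≠ 0 →
      norm2 (y i - y 0) = r * norm2 (x i - x 0) ∧ r * norm2 (x i - x 0) ≠ 0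

/-- `𝓔` contains a pair of `k`-paths with dilation ratio `r`: there are distinct
`x₁, …, x_{k+1} ∈ 𝓔` and distinct `y₁, …, y_{k+1} ∈ 𝓔` with
`‖y_{i+1} − y_i‖ = r‖x_{i+1} − x_i‖ ≠ 0` for `i = 1, …, k`. -/
def ContainsPairOfPaths {F : Type*} [Field F] {d : ℕ}
    (𝓔 : Finset (Fin d → F)) (k : ℕ) (r : F) : Prop :=
  ∃ x y : Fin (k + 1) → (Fin d → F),
    Function.Injective x ∧ Function.Injective y ∧
    (∀ i, x i ∈ 𝓔) ∧ (∀ i, y i ∈ 𝓔) ∧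
    ∀ i : Fin k,
      norm2 (y i.succ - y i.castSucc) = r * norm2 (x i.succ - x i.castSucc) ∧
      r * norm2 (x i.succ - x i.castSucc) ≠ 0

open scoped Classical

/-- `P_k(r)`: tuples `(x₁, …, x_{k+1}, y₁, …, y_{k+1}) ∈ 𝓔^{2k+2}` with
`‖y_{i+1} − y_i‖ = r‖x_{i+1} − x_i‖ ≠ 0` for all `i = 1, …, k`. -/

noncomputable def Pset {F : Type*} [Field F] [Fintype F] {d : ℕ}
    (𝓔 : Finset (Fin d → F)) (k : ℕ) (r : F) :
    Finset ((Fin (k + 1) → Fin d → F) × (Fin (k + 1) → Fin d → F)) :=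
  Finset.univ.filter fun p =>
    (∀ i, p.1 i ∈ 𝓔) ∧ (∀ i, p.2 i ∈ 𝓔) ∧
    ∀ i : Fin k,
      norm2 (p.2 i.succ - p.2 i.castSucc) = r * norm2 (p.1 i.succ - p.1 i.castSucc) ∧
      r * norm2 (p.1 i.succ - p.1 i.castSucc) ≠ 0

section Aux

variable {F : Type*} [Field F] [Fintype F] {d : ℕ}

lemma norm2_sub_comm (a b : Fin d → F) : norm2 (a - b) = norm2 (b - a) := by
  unfold norm2
  refine Finset.sum_congr rfl fun i _ => ?_
  simp only [Pi.sub_apply]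
  ring

/-- adjacency on pairs -/
def adjP (r : F) (u v : (Fin d → F) × (Fin d → F)) : Prop :=
  norm2 (v.2 - u.2) = r * norm2 (v.1 - u.1) ∧ r * norm2 (v.1 - u.1) ≠ 0

lemma adjP_symm {r : F} {u v : (Fin d → F) × (Fin d → F)} (h : adjP r u v) : adjP r v u := by
  obtain ⟨h1, h2⟩ := h
  refine ⟨?_, ?_⟩
  · rw [norm2_sub_comm u.2 v.2, norm2_sub_comm u.1 v.1]; exact h1
  · rw [norm2_sub_comm u.1 v.1]; exact h2

lemma Pset_one_card (𝓔 : Finset (Fin d → F)) (r : F) :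
    (Pset 𝓔 1 r).card =
      ∑ u ∈ 𝓔 ×ˢ 𝓔, (((𝓔 ×ˢ 𝓔).filter (adjP r u)).card) := by
  classical
  have h1 : (Pset 𝓔 1 r).card =
      (((𝓔 ×ˢ 𝓔) ×ˢ (𝓔 ×ˢ 𝓔)).filter fun p => adjP r p.1 p.2).card := by
    apply Finset.card_nbij' (i := fun p => ((p.1 0, p.2 0), (p.1 1, p.2 1)))
      (j := fun q => (![q.1.1, q.2.1], ![q.1.2, q.2.2]))
    · intro p hp
      simp only [Pset, Finset.mem_coe, Finset.mem_filter, Finset.mem_univ, true_and] at hp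
      obtain ⟨hx, hy, hcond⟩ := hp
      have h0 := hcond 0
      simp only [Fin.succ_zero_eq_one, Fin.castSucc_zero] at h0
      simp only [Finset.mem_coe, Finset.mem_filter, Finset.mem_product]
      exact ⟨⟨⟨hx 0, hy 0⟩, hx 1, hy 1⟩, h0.1, h0.2⟩
    · intro q hq
      simp only [Finset.mem_coe, Finset.mem_filter, Finset.mem_product] at hq
      obtain ⟨⟨⟨h1, h2⟩, h3, h4⟩, h5, h6⟩ := hq
      simp only [Pset, Finset.mem_coe, Finset.mem_filter, Finset.mem_univ, true_and]
      refine ⟨?_, ?_, ?_⟩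
      · intro i; fin_cases i <;> simpa
      · intro i; fin_cases i <;> simpa
      · intro i
        have : i = 0 := Subsingleton.elim _ _
        subst this
        simp only [Fin.succ_zero_eq_one, Fin.castSucc_zero]
        simp only [Matrix.cons_val_one, Matrix.head_cons, Matrix.cons_val_zero]
        exact ⟨h5, h6⟩
    · intro p _
      refine Prod.ext ?_ ?_ <;> (funext i; fin_cases i <;> simp)
    · intro q _
      simp
  rw [h1, Finset.card_filter, Finset.sum_product]
  refine Finset.sum_congr rfl fun u _ => ?_
  rw [Finset.card_filter]

lemma exists_mindeg {A : Type*} [DecidableEq A] (adj : A → A → Prop) [DecidableRel adj]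
    (hsym : ∀ a b, adj a b → adj b a) (c : ℝ) (hc : 0 ≤ c) (S : Finset A) :
    0 < ∑ u ∈ S, ((S.filter (adj u)).card) →
    c * S.card ≤ ((∑ u ∈ S, ((S.filter (adj u)).card) : ℕ) : ℝ) →
    ∃ T, T ⊆ S ∧ T.Nonempty ∧ ∀ u ∈ T, c ≤ 2 * ((T.filter (adj u)).card : ℝ) := by
  classical
  induction S using Finset.strongInduction with
  | _ S ih =>
    intro hpos hE
    by_cases hall : ∀ u ∈ S, c ≤ 2 * ((S.filter (adj u)).card : ℝ)
    · refine ⟨S, Finset.Subset.refl S, ?_, hall⟩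
      rw [Finset.nonempty_iff_ne_empty]
      rintro rfl
      simp at hpos
    · push_neg at hall
      obtain ⟨u, huS, hu⟩ := hall
      set S' := S.erase u with hS'def
      have hins : S = insert u S' := (Finset.insert_erase huS).symm
      have huS' : u ∉ S' := Finset.notMem_erase u S
      have hstep : ∀ a, (S.filter (adj a)).card ≤
          (S'.filter (adj a)).card + (if adj a u then 1 else 0) := by
        intro a
        conv_lhs => rw [hins]
        rw [Finset.filter_insert]
        split_ifs with h
        · exact Finset.card_insert_le _ _
        · simp
      have key : (∑ a ∈ S, (S.filter (adj a)).card) ≤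
          (∑ a ∈ S', (S'.filter (adj a)).card) + 2 * (S.filter (adj u)).card := by
        have e1 : (∑ a ∈ S, (S.filter (adj a)).card)
            = (S.filter (adj u)).card + ∑ a ∈ S', (S.filter (adj a)).card := by
          rw [hS'def]
          exact (Finset.add_sum_erase S (fun a => (S.filter (adj a)).card) huS).symm
        have e2 : (∑ a ∈ S', (S.filter (adj a)).card) ≤
            (∑ a ∈ S', (S'.filter (adj a)).card) +
              (∑ a ∈ S', (if adj a u then 1 else 0)) := by
          rw [← Finset.sum_add_distrib]
          exact Finset.sum_le_sum fun a _ => hstep a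
        have e3 : (∑ a ∈ S', (if adj a u then 1 else 0)) ≤ (S.filter (adj u)).card := by
          rw [← Finset.card_filter]
          calc (S'.filter (fun a => adj a u)).card
              ≤ (S.filter (fun a => adj a u)).card :=
                Finset.card_le_card (Finset.filter_subset_filter _ (Finset.erase_subset _ _))
            _ = (S.filter (adj u)).card := by
                apply congrArg
                apply Finset.filter_congr
                intro a _
                exact ⟨fun h => hsym a u h, fun h => hsym u a h⟩
        omega
      have hcard1 : (S'.card : ℝ) = (S.card : ℝ) - 1 := by
        rw [hS'def, Finset.card_erase_of_mem huS]
        have h1 : 1 ≤ S.card := Finset.card_pos.mpr ⟨u, huS⟩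
        push_cast [h1]
        ring
      have keyR : ((∑ a ∈ S, (S.filter (adj a)).card : ℕ) : ℝ) ≤
          ((∑ a ∈ S', (S'.filter (adj a)).card : ℕ) : ℝ) +
            2 * ((S.filter (adj u)).card : ℝ) := by
        exact_mod_cast key
      have hlt : c * S'.card < ((∑ a ∈ S', (S'.filter (adj a)).card : ℕ) : ℝ) := by
        rw [hcard1]
        nlinarith [hE, keyR, hu]
      have hpos' : 0 < ∑ a ∈ S', (S'.filter (adj a)).card := by
        have h0 : (0:ℝ) ≤ c * S'.card := mul_nonneg hc (Nat.cast_nonneg _)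
        have : (0:ℝ) < ((∑ a ∈ S', (S'.filter (adj a)).card : ℕ) : ℝ) := lt_of_le_of_lt h0 hlt
        exact_mod_cast this
      obtain ⟨T, hTS', hTne, hT⟩ := ih S' (Finset.erase_ssubset huS) hpos' hlt.le
      exact ⟨T, hTS'.trans (Finset.erase_subset _ _), hTne, hT⟩

lemma greedy_step (𝓔 : Finset (Fin d → F)) (r : F)
    (T : Finset ((Fin d → F) × (Fin d → F))) (hT : T ⊆ 𝓔 ×ˢ 𝓔)
    (u : (Fin d → F) × (Fin d → F))
    (hdegu : 8 * 𝓔.card < (T.filter (adjP r u)).card)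
    (xs ys : Finset (Fin d → F)) (hxs : xs.card ≤ 4) (hys : ys.card ≤ 4) :
    ∃ v ∈ T, adjP r u v ∧ v.1 ∉ xs ∧ v.2 ∉ ys := by
  classical
  set Nb := T.filter (adjP r u) with hNb
  set good := Nb.filter (fun v => v.1 ∉ xs ∧ v.2 ∉ ys) with hgood
  have hsub : Nb ⊆ good ∪ (xs ×ˢ 𝓔 ∪ 𝓔 ×ˢ ys) := by
    intro v hv
    have hvE : v ∈ 𝓔 ×ˢ 𝓔 := hT (Finset.mem_filter.mp hv).1
    rw [Finset.mem_product] at hvE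
    by_cases h1 : v.1 ∈ xs
    · exact Finset.mem_union_right _ (Finset.mem_union_left _
        (Finset.mem_product.mpr ⟨h1, hvE.2⟩))
    by_cases h2 : v.2 ∈ ys
    · exact Finset.mem_union_right _ (Finset.mem_union_right _
        (Finset.mem_product.mpr ⟨hvE.1, h2⟩))
    · exact Finset.mem_union_left _ (Finset.mem_filter.mpr ⟨hv, h1, h2⟩)
  have hb1 : (xs ×ˢ 𝓔).card ≤ 4 * 𝓔.card := by
    rw [Finset.card_product]
    exact Nat.mul_le_mul_right _ hxs
  have hb2 : (𝓔 ×ˢ ys).card ≤ 4 * 𝓔.card := by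
    rw [Finset.card_product, mul_comm]
    exact Nat.mul_le_mul_right _ hys
  have hcards : Nb.card ≤ good.card + (4 * 𝓔.card + 4 * 𝓔.card) := by
    calc Nb.card ≤ (good ∪ (xs ×ˢ 𝓔 ∪ 𝓔 ×ˢ ys)).card := Finset.card_le_card hsub
      _ ≤ good.card + (xs ×ˢ 𝓔 ∪ 𝓔 ×ˢ ys).card := Finset.card_union_le _ _
      _ ≤ good.card + ((xs ×ˢ 𝓔).card + (𝓔 ×ˢ ys).card) := by
          exact Nat.add_le_add_left (Finset.card_union_le _ _) _
      _ ≤ good.card + (4 * 𝓔.card + 4 * 𝓔.card) := by omega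
  have hgoodpos : 0 < good.card := by omega
  obtain ⟨v, hv⟩ := Finset.card_pos.mp hgoodpos
  rw [hgood, Finset.mem_filter] at hv
  obtain ⟨hvNb, hv1, hv2⟩ := hv
  rw [hNb, Finset.mem_filter] at hvNb
  exact ⟨v, hvNb.1, hvNb.2, hv1, hv2⟩

lemma inj5 {α : Type*} {a0 a1 a2 a3 a4 : α}
    (h10 : a1 ≠ a0) (h20 : a2 ≠ a0) (h21 : a2 ≠ a1)
    (h30 : a3 ≠ a0) (h31 : a3 ≠ a1) (h32 : a3 ≠ a2)
    (h40 : a4 ≠ a0) (h41 : a4 ≠ a1) (h42 : a4 ≠ a2) (h43 : a4 ≠ a3) :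
    Function.Injective ![a0, a1, a2, a3, a4] := by
  intro i j hij
  fin_cases i <;> fin_cases j <;> simp_all

end Aux

lemma card_quad_le {α : Type*} [DecidableEq α] (a b c e : α) :
    ({a, b, c, e} : Finset α).card ≤ 4 := by
  have h1 : ({e} : Finset α).card = 1 := Finset.card_singleton e
  have h2 := Finset.card_insert_le c ({e} : Finset α)
  have h3 := Finset.card_insert_le b ({c, e} : Finset α)
  have h4 := Finset.card_insert_le a ({b, c, e} : Finset α)
  omega

lemma card_triple_le {α : Type*} [DecidableEq α] (a b c : α) :
    ({a, b, c} : Finset α).card ≤ 4 := by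
  have h1 : ({c} : Finset α).card = 1 := Finset.card_singleton c
  have h2 := Finset.card_insert_le b ({c} : Finset α)
  have h3 := Finset.card_insert_le a ({b, c} : Finset α)
  omega

lemma card_pair_le {α : Type*} [DecidableEq α] (a b : α) :
    ({a, b} : Finset α).card ≤ 4 := by
  have h1 : ({b} : Finset α).card = 1 := Finset.card_singleton b
  have h2 := Finset.card_insert_le a ({b} : Finset α)
  omega


/-- For `d ≥ 6`, if `|𝓔| ≥ 313·q^(d/2)` and
`|P_1(r)| > 1.26844·|𝓔|^(11/3)`, then `𝓔` contains a pair of `4`-paths with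
dilation ratio `r`. -/
theorem paths_of_Pset_one_large_high_dim {F : Type*} [Field F] [Fintype F]
    (hodd : Odd (Fintype.card F))
    {d : ℕ} (hd : 6 ≤ d)
    (𝓔 : Finset (Fin d → F)) (r : F)
    (hcard : 313 * (Fintype.card F : ℝ) ^ ((d : ℝ) / 2) ≤ (𝓔.card : ℝ))
    (hP : 1.26844 * (𝓔.card : ℝ) ^ ((11 : ℝ) / 3) < ((Pset 𝓔 1 r).card : ℝ)) :
    ContainsPairOfPaths 𝓔 4 r := by
  classical
  set n := 𝓔.card with hn
  set V := 𝓔 ×ˢ 𝓔 with hV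
  have hq2 : 1 < Fintype.card F := Fintype.one_lt_card
  have hq3 : 3 ≤ Fintype.card F := by
    rcases hodd with ⟨m, hm⟩; omega
  have hQ3 : (27 : ℝ) ≤ (Fintype.card F : ℝ) ^ ((d : ℝ) / 2) := by
    have hQ1 : (1 : ℝ) ≤ (Fintype.card F : ℝ) := by exact_mod_cast hq2.le
    have h3 : ((3 : ℕ) : ℝ) ≤ (d : ℝ) / 2 := by
      have h6 : (6 : ℝ) ≤ (d : ℝ) := by exact_mod_cast hd
      push_cast; linarith
    calc (27 : ℝ) = (3 : ℝ) ^ (3 : ℕ) := by norm_num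
      _ ≤ (Fintype.card F : ℝ) ^ (3 : ℕ) := by
          apply pow_le_pow_left₀ (by norm_num)
          exact_mod_cast hq3
      _ = (Fintype.card F : ℝ) ^ ((3 : ℕ) : ℝ) := (Real.rpow_natCast _ 3).symm
      _ ≤ (Fintype.card F : ℝ) ^ ((d : ℝ) / 2) :=
          Real.rpow_le_rpow_of_exponent_le hQ1 h3
  have hn8451 : (8451 : ℝ) ≤ (n : ℝ) := by nlinarith [hcard, hQ3]
  have hnpos : (0 : ℝ) < (n : ℝ) := by linarith
  have h23 : (413 : ℝ) ≤ (n : ℝ) ^ ((2 : ℝ) / 3) := by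
    have ht : (0 : ℝ) ≤ (n : ℝ) ^ ((2 : ℝ) / 3) := Real.rpow_nonneg hnpos.le _
    have hcube : ((n : ℝ) ^ ((2 : ℝ) / 3)) ^ (3 : ℕ) = (n : ℝ) ^ (2 : ℕ) := by
      rw [← Real.rpow_natCast ((n : ℝ) ^ ((2 : ℝ) / 3)) 3, ← Real.rpow_mul hnpos.le,
        ← Real.rpow_natCast (n : ℝ) 2]
      norm_num
    apply le_of_pow_le_pow_left₀ (n := 3) (by norm_num) ht
    rw [hcube]
    nlinarith [hn8451]
  have hsplit : (n : ℝ) ^ ((11 : ℝ) / 3) = (n : ℝ) ^ (3 : ℕ) * (n : ℝ) ^ ((2 : ℝ) / 3) := by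
    rw [← Real.rpow_natCast (n : ℝ) 3, ← Real.rpow_add hnpos]
    norm_num
  have hPe : 16 * (n : ℝ) ^ (3 : ℕ) < ((Pset 𝓔 1 r).card : ℝ) := by
    have hn3 : (0 : ℝ) ≤ (n : ℝ) ^ (3 : ℕ) := by positivity
    nlinarith [hP, h23, hsplit]
  -- edge count
  obtain ⟨e, he⟩ : ∃ e : ℕ, e = ∑ u ∈ V, ((V.filter (adjP r u)).card) := ⟨_, rfl⟩
  have hEcard : (Pset 𝓔 1 r).card = e := by rw [he]; exact Pset_one_card 𝓔 r
  have heR : ((e : ℕ) : ℝ) = ((Pset 𝓔 1 r).card : ℝ) := by rw [hEcard]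
  have hVcard : V.card = n * n := by rw [hV, Finset.card_product]
  obtain ⟨c, hc⟩ : ∃ c : ℝ, c = (e : ℝ) / ((n : ℝ) * n) := ⟨_, rfl⟩
  have hcnn : 0 ≤ c := by
    rw [hc]
    exact div_nonneg (Nat.cast_nonneg _) (by positivity)
  have hepos : 0 < e := by
    have h0 : (0 : ℝ) < ((e : ℕ) : ℝ) := by rw [heR]; nlinarith [hPe]
    exact_mod_cast h0
  have hcE : c * V.card ≤ ((e : ℕ) : ℝ) := by
    rw [hVcard, hc]
    push_cast
    rw [div_mul_cancel₀]
    positivity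
  obtain ⟨T, hTV, hTne, hTdeg⟩ :=
    exists_mindeg (adjP r) (fun a b h => adjP_symm h) c hcnn V (he ▸ hepos) (by rw [← he]; exact hcE)
  have hc16 : 16 * (n : ℝ) < c := by
    rw [hc]
    rw [lt_div_iff₀ (show (0:ℝ) < (n : ℝ) * n by positivity)]
    nlinarith [hPe, heR]
  have hdegT : ∀ u ∈ T, 8 * 𝓔.card < (T.filter (adjP r u)).card := by
    intro u hu
    have h1 := hTdeg u hu
    have h2 : 8 * (n : ℝ) < ((T.filter (adjP r u)).card : ℝ) := by linarith
    exact_mod_cast h2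
  have hm : ∀ w ∈ T, w.1 ∈ 𝓔 ∧ w.2 ∈ 𝓔 := fun w hw => Finset.mem_product.mp (hTV hw)
  have step := fun (u : (Fin d → F) × (Fin d → F)) (hu : u ∈ T) xs ys hxs hys =>
    greedy_step 𝓔 r T hTV u (hdegT u hu) xs ys hxs hys
  obtain ⟨u0, hu0⟩ := hTne
  obtain ⟨u1, hu1T, ha1, hx1, hy1⟩ := step u0 hu0 {u0.1} {u0.2} (by simp) (by simp)
  obtain ⟨u2, hu2T, ha2, hx2, hy2⟩ := step u1 hu1T {u0.1, u1.1} {u0.2, u1.2}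
    (card_pair_le _ _) (card_pair_le _ _)
  obtain ⟨u3, hu3T, ha3, hx3, hy3⟩ := step u2 hu2T {u0.1, u1.1, u2.1} {u0.2, u1.2, u2.2}
    (card_triple_le _ _ _) (card_triple_le _ _ _)
  obtain ⟨u4, hu4T, ha4, hx4, hy4⟩ := step u3 hu3T {u0.1, u1.1, u2.1, u3.1}
    {u0.2, u1.2, u2.2, u3.2} (card_quad_le _ _ _ _) (card_quad_le _ _ _ _)
  simp only [Finset.mem_singleton] at hx1 hy1
  simp only [Finset.mem_insert, Finset.mem_singleton, not_or] at hx2 hy2 hx3 hy3 hx4 hy4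
  refine ⟨![u0.1, u1.1, u2.1, u3.1, u4.1], ![u0.2, u1.2, u2.2, u3.2, u4.2], ?_, ?_, ?_, ?_, ?_⟩
  · exact inj5 hx1 hx2.1 hx2.2 hx3.1 hx3.2.1 hx3.2.2 hx4.1 hx4.2.1 hx4.2.2.1 hx4.2.2.2
  · exact inj5 hy1 hy2.1 hy2.2 hy3.1 hy3.2.1 hy3.2.2 hy4.1 hy4.2.1 hy4.2.2.1 hy4.2.2.2
  · intro i
    fin_cases i
    · exact (hm u0 hu0).1
    · exact (hm u1 hu1T).1
    · exact (hm u2 hu2T).1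
    · exact (hm u3 hu3T).1
    · exact (hm u4 hu4T).1
  · intro i
    fin_cases i
    · exact (hm u0 hu0).2
    · exact (hm u1 hu1T).2
    · exact (hm u2 hu2T).2
    · exact (hm u3 hu3T).2
    · exact (hm u4 hu4T).2
  · intro i
    fin_cases i
    · exact ha1
    · exact ha2
    · exact ha3
    · exact ha4
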